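/- Let N be a positive integer, x : Fin N → ℝ, and let a*, a : Fin N → ℝ take values in [0,1]. Suppose Σ_n a*_n = p*·N with p* > 0, and let μ* := (Σ_n a*_n x_n)/(Σ_n a*_n). Let ε₁, ε₂ > 0 with ε₁ < p*, and assume |Σ_n a_n − Σ_n a*_n| ≤ ε₁·N and |Σ_n a_n x_n − Σ_n a*_n x_n| ≤ ε₂·N. Then Σ_n a_n > 0, and the weighted mean μ := (Σ_n a_n x_n)/(Σ_n a_n) satisfies |μ − μ*| ≤ (ε₂ + ε₁·|μ*|)/(p* − ε₁). -/

import Mathlib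

open Finset

/-- Quantitative stability of the weighted mean under perturbation of weights
(paper's Lemma 2, mean part). -/
theorem weighted_mean_stability
    (N : ℕ) (hN : 0 < N) (x aStar a : Fin N → ℝ)
    (haStar : ∀ n, aStar n ∈ Set.Icc (0 : ℝ) 1)
    (ha : ∀ n, a n ∈ Set.Icc (0 : ℝ) 1)
    (pStar : ℝ) (hpStar : 0 < pStar)
    (hsum : ∑ n, aStar n = pStar * N)
    (ε₁ ε₂ : ℝ) (hε₁ : 0 < ε₁) (hε₂ : 0 < ε₂) (hε₁p : ε₁ < pStar)
    (h1 : |(∑ n, a n) - ∑ n, aStar n| ≤ ε₁ * N)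
    (h2 : |(∑ n, a n * x n) - ∑ n, aStar n * x n| ≤ ε₂ * N) :
    0 < ∑ n, a n ∧
      |(∑ n, a n * x n) / (∑ n, a n)
          - (∑ n, aStar n * x n) / (∑ n, aStar n)|
        ≤ (ε₂ + ε₁ * |(∑ n, aStar n * x n) / (∑ n, aStar n)|) / (pStar - ε₁) := by
  set S := ∑ n, a n with hSdef
  set S' := ∑ n, aStar n with hS'def
  set T := ∑ n, a n * x n with hTdef
  set T' := ∑ n, aStar n * x n with hT'def
  have hNr : (0:ℝ) < N := by exact_mod_cast hN
  have hSlb : (pStar - ε₁) * N ≤ S := by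
    have := (abs_le.mp h1).1
    nlinarith
  have hSpos : 0 < S := lt_of_lt_of_le (mul_pos (by linarith) hNr) hSlb
  refine ⟨hSpos, ?_⟩
  set μ' := T' / S' with hμ'
  have hS'pos : 0 < S' := by rw [hsum]; exact mul_pos hpStar hNr
  have hT' : T' = μ' * S' := by rw [hμ', div_mul_cancel₀ _ (ne_of_gt hS'pos)]
  have num : |T - μ' * S| ≤ (ε₂ + ε₁ * |μ'|) * N := by
    have heq : T - μ' * S = (T - T') + μ' * (S' - S) := by rw [hT']; ring
    rw [heq]
    calc |(T - T') + μ' * (S' - S)| ≤ |T - T'| + |μ' * (S' - S)| := abs_add_le _ _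
      _ ≤ ε₂ * N + |μ'| * (ε₁ * N) := by
          refine add_le_add h2 ?_
          rw [abs_mul, abs_sub_comm]
          exact mul_le_mul_of_nonneg_left h1 (abs_nonneg _)
      _ = (ε₂ + ε₁ * |μ'|) * N := by ring
  have h3 : T / S - μ' = (T - μ' * S) / S := by field_simp
  rw [h3, abs_div, abs_of_pos hSpos]
  calc |T - μ' * S| / S ≤ ((ε₂ + ε₁ * |μ'|) * N) / ((pStar - ε₁) * N) :=
        div_le_div₀ (by positivity) num (mul_pos (by linarith) hNr) hSlb
    _ = (ε₂ + ε₁ * |μ'|) / (pStar - ε₁) := mul_div_mul_right _ _ (ne_of_gt hNr)
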